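/- Let a_X, a_Y > −1, b_X, b_Y > 0, and let X and Y be independent random variables, where X is the square of a Gamma(a_X+1, b_X) random variable and Y is the square of a Gamma(a_Y+1, b_Y) random variable. Let λ, β, P, c, a_φ > 0 and a target rate R > 0, and set the OMA threshold γ^{OMA} = 2^{2R} − 1. Then ℙ( β·P·a_φ·X·Y/(λ·c) < γ^{OMA} ) = (1/Γ(a_X+1)) ∫_0^∞ t^{a_X}·e^{−t} · (γ(a_Y+1, √(λ·γ^{OMA}·c/(β·P·a_φ))/(b_X·b_Y·t))/Γ(a_Y+1)) dt, where γ(s,x) = ∫_0^x u^{s−1}·e^{−u} du is the lower incomplete gamma function. -/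

import Mathlib

open MeasureTheory ProbabilityTheory

/-- Density of the square of a `Gamma(a+1, b)` random variable:
`x ↦ x^{(a−1)/2}·e^{−√x/b}/(2·b^{a+1}·Γ(a+1))` on `(0,∞)`. -/
noncomputable def sqGammaDensity (a b x : ℝ) : ℝ :=
  if 0 < x then
    x ^ ((a - 1) / 2) * Real.exp (-Real.sqrt x / b) / (2 * b ^ (a + 1) * Real.Gamma (a + 1))
  else 0

/-- The lower incomplete gamma function `γ(s, x) = ∫_0^x u^{s−1}·e^{−u} du`. -/
noncomputable def lincGamma (s x : ℝ) : ℝ :=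
  ∫ u in (0 : ℝ)..x, u ^ (s - 1) * Real.exp (-u)

section Helpers

open Set ENNReal

lemma lintegral_image_eq_lintegral_abs_deriv_mul' {s : Set ℝ} {f f' : ℝ → ℝ}
    (hs : MeasurableSet s) (hf' : ∀ x ∈ s, HasDerivWithinAt f (f' x) s x)
    (hf : InjOn f s) (g : ℝ → ℝ≥0∞) :
    ∫⁻ x in f '' s, g x = ∫⁻ x in s, ENNReal.ofReal |f' x| * g (f x) := by
  simpa only [ContinuousLinearMap.det_toSpanSingleton] using
    lintegral_image_eq_lintegral_abs_det_fderiv_mul volume hs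
      (fun x hx => (hf' x hx).hasFDerivWithinAt) hf g

lemma sq_image_Ioi {b : ℝ} (hb : 0 < b) :
    (fun u : ℝ => b ^ 2 * u ^ 2) '' Ioi (0:ℝ) = Ioi (0:ℝ) := by
  ext x
  simp only [mem_image, mem_Ioi]
  constructor
  · rintro ⟨u, hu, rfl⟩
    positivity
  · intro hx
    refine ⟨Real.sqrt x / b, by positivity, ?_⟩
    rw [div_pow, Real.sq_sqrt (le_of_lt hx)]
    field_simp

lemma sq_image_Ioo {b z : ℝ} (hb : 0 < b) (hz : 0 < z) :
    (fun u : ℝ => b ^ 2 * u ^ 2) '' Ioo 0 z = Ioo 0 (b ^ 2 * z ^ 2) := by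
  ext x
  simp only [mem_image, mem_Ioo]
  constructor
  · rintro ⟨u, ⟨hu0, huz⟩, rfl⟩
    constructor
    · positivity
    · have h2 : u ^ 2 < z ^ 2 := by nlinarith
      exact mul_lt_mul_of_pos_left h2 (by positivity)
  · rintro ⟨hx0, hxz⟩
    refine ⟨Real.sqrt x / b, ⟨by positivity, ?_⟩, ?_⟩
    · rw [div_lt_iff₀ hb]
      have h1 : Real.sqrt x < Real.sqrt (b ^ 2 * z ^ 2) :=
        Real.sqrt_lt_sqrt (le_of_lt hx0) hxz
      rwa [show b ^ 2 * z ^ 2 = (z * b) ^ 2 by ring, Real.sqrt_sq (by positivity)] at h1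
    · rw [div_pow, Real.sq_sqrt (le_of_lt hx0)]
      field_simp

lemma sq_injOn {b : ℝ} (hb : 0 < b) : InjOn (fun u : ℝ => b ^ 2 * u ^ 2) (Ioi 0) := by
  intro u hu v hv h
  simp only [mem_Ioi] at hu hv
  simp only at h
  have h2 : (u - v) * (u + v) = 0 := by
    have hb2 : (b:ℝ) ^ 2 ≠ 0 := by positivity
    have := mul_left_cancel₀ hb2 h
    nlinarith [this]
  rcases mul_eq_zero.1 h2 with h3 | h3
  · linarith
  · linarith

lemma sq_hasDeriv {b : ℝ} (s : Set ℝ) :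
    ∀ u ∈ s, HasDerivWithinAt (fun u : ℝ => b ^ 2 * u ^ 2) (2 * b ^ 2 * u) s u := by
  intro u _
  have h : HasDerivAt (fun u : ℝ => b ^ 2 * u ^ 2) (b ^ 2 * (2 * u)) u := by
    simpa using (hasDerivAt_pow 2 u).const_mul (b ^ 2)
  have h2 : (2 : ℝ) * b ^ 2 * u = b ^ 2 * (2 * u) := by ring
  rw [h2]
  exact h.hasDerivWithinAt

lemma density_transform {a b u : ℝ} (ha : -1 < a) (hb : 0 < b) (hu : 0 < u) :
    2 * b ^ 2 * u * sqGammaDensity a b (b ^ 2 * u ^ 2)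
      = u ^ a * Real.exp (-u) / Real.Gamma (a + 1) := by
  have hbu : 0 < b * u := mul_pos hb hu
  have hΓ : 0 < Real.Gamma (a + 1) := Real.Gamma_pos_of_pos (by linarith)
  rw [sqGammaDensity, if_pos (by positivity)]
  have h1 : Real.sqrt (b ^ 2 * u ^ 2) = b * u := by
    rw [show b ^ 2 * u ^ 2 = (b * u) ^ 2 by ring, Real.sqrt_sq hbu.le]
  have h2 : (b ^ 2 * u ^ 2) ^ ((a - 1) / 2) = b ^ (a - 1) * u ^ (a - 1) := by
    rw [show b ^ 2 * u ^ 2 = (b * u) ^ 2 by ring, ← Real.rpow_natCast (b * u) 2,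
      ← Real.rpow_mul hbu.le, show ((2:ℕ):ℝ) * ((a - 1) / 2) = a - 1 by push_cast; ring,
      Real.mul_rpow hb.le hu.le]
  rw [h1, h2, show -(b * u) / b = -u by field_simp [mul_comm]]
  have hb1 : b ^ (a - 1) * b ^ 2 = b ^ (a + 1) := by
    rw [show (b:ℝ) ^ (2:ℕ) = b ^ ((2:ℕ):ℝ) by rw [Real.rpow_natCast],
      ← Real.rpow_add hb]
    congr 1
    ring
  have hu1 : u ^ (a - 1) * u = u ^ a := by
    rw [← Real.rpow_add_one hu.ne' (a - 1), sub_add_cancel]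
  have hbne : b ^ (a + 1) ≠ 0 := (Real.rpow_pos_of_pos hb _).ne'
  field_simp
  linear_combination (1 : ℝ) *
    (u ^ (a - 1) * u * hb1 + b ^ (a + 1) * hu1)

lemma integrableOn_rpow_exp {a : ℝ} (ha : -1 < a) (z : ℝ) :
    IntegrableOn (fun u : ℝ => u ^ a * Real.exp (-u)) (Ioo 0 z) := by
  have h := Real.GammaIntegral_convergent (show (0:ℝ) < a + 1 by linarith)
  have he : (fun x : ℝ => Real.exp (-x) * x ^ (a + 1 - 1)) =
      fun u : ℝ => u ^ a * Real.exp (-u) := by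
    funext x; rw [add_sub_cancel_right, mul_comm]
  rw [he] at h
  exact h.mono_set Ioo_subset_Ioi_self

lemma monotone_G {a : ℝ} (ha : -1 < a) :
    Monotone (fun z : ℝ => ∫ u in Ioo 0 z, u ^ a * Real.exp (-u)) := by
  intro z1 z2 h
  refine setIntegral_mono_set (integrableOn_rpow_exp ha z2) ?_ ?_
  · filter_upwards [ae_restrict_mem measurableSet_Ioo] with u hu
    have : (0:ℝ) < u := hu.1
    positivity
  · exact HasSubset.Subset.eventuallyLE (Ioo_subset_Ioo_right h)

lemma measurable_sqGammaDensity (a b : ℝ) : Measurable (sqGammaDensity a b) := by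
  unfold sqGammaDensity
  refine Measurable.ite measurableSet_Ioi ?_ measurable_const
  fun_prop

lemma lintegral_eq_Ioi {h : ℝ → ℝ≥0∞} (h0 : ∀ x ≤ 0, h x = 0) :
    ∫⁻ x, h x = ∫⁻ x in Ioi (0:ℝ), h x := by
  rw [← lintegral_indicator measurableSet_Ioi _]
  congr 1; funext x
  by_cases hx : 0 < x
  · simp [Set.indicator_apply, hx]
  · simp [Set.indicator_apply, hx, h0 x (le_of_not_gt hx)]

lemma setLIntegral_Iio_eq_Ioo {h : ℝ → ℝ≥0∞} {c : ℝ} (h0 : ∀ x ≤ 0, h x = 0) :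
    ∫⁻ x in Iio c, h x = ∫⁻ x in Ioo 0 c, h x := by
  rw [← lintegral_indicator measurableSet_Iio _, ← lintegral_indicator measurableSet_Ioo _]
  congr 1; funext x
  simp only [Set.indicator_apply, Set.mem_Iio, Set.mem_Ioo]
  by_cases hx : 0 < x <;> by_cases hxc : x < c <;>
    simp [hx, hxc]
  · exact h0 x (le_of_not_gt hx)

end Helpers

/-- exact (pre-quadrature) form of Theorem 3 of the paper: the outage
probability of the φ-th user in the PRIS-ARIS-OMA benchmark, with OMA target SNR
threshold `γ^OMA = 2^{2R} − 1`. -/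
theorem outage_OMA {α : Type*} [MeasurableSpace α]
    (μ : Measure α) [IsProbabilityMeasure μ]
    (aX aY bX bY : ℝ) (haX : -1 < aX) (haY : -1 < aY) (hbX : 0 < bX) (hbY : 0 < bY)
    (X Y : α → ℝ) (hX : Measurable X) (hY : Measurable Y)
    (hXY : IndepFun X Y μ)
    (hXlaw : Measure.map X μ =
      volume.withDensity (fun x => ENNReal.ofReal (sqGammaDensity aX bX x)))
    (hYlaw : Measure.map Y μ =
      volume.withDensity (fun y => ENNReal.ofReal (sqGammaDensity aY bY y)))
    (lam β P c aphi R : ℝ) (hlam : 0 < lam) (hβ : 0 < β) (hP : 0 < P) (hc : 0 < c)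
    (haphi : 0 < aphi) (hR : 0 < R)
    (gOMA : ℝ) (hgOMA : gOMA = 2 ^ (2 * R) - 1) :
    (μ {ω | β * P * aphi * X ω * Y ω / (lam * c) < gOMA}).toReal =
      (1 / Real.Gamma (aX + 1)) *
        ∫ t in Set.Ioi (0 : ℝ),
          t ^ aX * Real.exp (-t) *
            (lincGamma (aY + 1)
                (Real.sqrt (lam * gOMA * c / (β * P * aphi)) / (bX * bY * t)) /
              Real.Gamma (aY + 1)) := by
  have hΓX : 0 < Real.Gamma (aX + 1) := Real.Gamma_pos_of_pos (by linarith)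
  have hΓY : 0 < Real.Gamma (aY + 1) := Real.Gamma_pos_of_pos (by linarith)
  have hg0 : 0 < gOMA := by
    rw [hgOMA, sub_pos]
    exact (Real.one_lt_rpow_iff_of_pos two_pos).2 (Or.inl ⟨one_lt_two, by linarith⟩)
  set K : ℝ := lam * gOMA * c / (β * P * aphi) with hKdef
  have hK : 0 < K := by positivity
  set G : ℝ → ℝ := fun z => ∫ u in Set.Ioo 0 z, u ^ aY * Real.exp (-u) with hG
  have hGnonneg : ∀ z : ℝ, 0 ≤ G z := fun z =>
    setIntegral_nonneg measurableSet_Ioo fun u hu => by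
      have : (0:ℝ) < u := hu.1
      positivity
  -- step 0 : rewrite the event
  have hset : {ω | β * P * aphi * X ω * Y ω / (lam * c) < gOMA} = {ω | X ω * Y ω < K} := by
    ext ω
    simp only [Set.mem_setOf_eq]
    rw [div_lt_iff₀ (by positivity), hKdef, lt_div_iff₀ (by positivity)]
    constructor <;> intro h <;> linarith [h]
  -- step 1 : independence and product measure
  haveI hprobX : IsProbabilityMeasure (Measure.map X μ) := Measure.isProbabilityMeasure_map hX.aemeasurable
  haveI hprobY : IsProbabilityMeasure (Measure.map Y μ) := Measure.isProbabilityMeasure_map hY.aemeasurable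
  have hpair : Measure.map (fun ω => (X ω, Y ω)) μ = (Measure.map X μ).prod (Measure.map Y μ) :=
    (indepFun_iff_map_prod_eq_prod_map_map hX.aemeasurable hY.aemeasurable).mp hXY
  have hS : MeasurableSet {p : ℝ × ℝ | p.1 * p.2 < K} :=
    measurableSet_lt (measurable_fst.mul measurable_snd) measurable_const
  have step1 : μ {ω | X ω * Y ω < K}
      = ∫⁻ x, Measure.map Y μ {y | x * y < K} ∂(Measure.map X μ) := by
    have h1 : μ {ω | X ω * Y ω < K}
        = Measure.map (fun ω => (X ω, Y ω)) μ {p : ℝ × ℝ | p.1 * p.2 < K} := by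
      rw [Measure.map_apply (hX.prodMk hY) hS]
      rfl
    rw [h1, hpair, Measure.prod_apply hS]
    rfl
  -- step 2 : inner integral computation
  have inner : ∀ x : ℝ, 0 < x →
      Measure.map Y μ {y | x * y < K}
        = ENNReal.ofReal (G (Real.sqrt (K / x) / bY) / Real.Gamma (aY + 1)) := by
    intro x hx
    have hKx0 : 0 < K / x := by positivity
    have hsetY : {y : ℝ | x * y < K} = Set.Iio (K / x) := by
      ext y
      simp only [Set.mem_setOf_eq, Set.mem_Iio]
      rw [lt_div_iff₀ hx]
      constructor <;> intro h <;> linarith [h]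
    set z := Real.sqrt (K / x) / bY with hzdef
    have hz : 0 < z := by positivity
    have hKx : K / x = bY ^ 2 * z ^ 2 := by
      rw [hzdef, div_pow, Real.sq_sqrt hKx0.le]
      field_simp
    have hvanish : ∀ y ≤ (0:ℝ), ENNReal.ofReal (sqGammaDensity aY bY y) = 0 := by
      intro y hy
      rw [sqGammaDensity, if_neg (not_lt.2 hy)]
      simp
    rw [hsetY, hYlaw, withDensity_apply _ measurableSet_Iio,
      setLIntegral_Iio_eq_Ioo hvanish, hKx, ← sq_image_Ioo hbY hz,
      lintegral_image_eq_lintegral_abs_deriv_mul' measurableSet_Ioo (sq_hasDeriv _)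
        ((sq_injOn hbY).mono Set.Ioo_subset_Ioi_self) _]
    have hptw : ∀ u ∈ Set.Ioo (0:ℝ) z,
        ENNReal.ofReal |2 * bY ^ 2 * u|
            * ENNReal.ofReal (sqGammaDensity aY bY (bY ^ 2 * u ^ 2))
          = ENNReal.ofReal (u ^ aY * Real.exp (-u) / Real.Gamma (aY + 1)) := by
      intro u hu
      have hu0 : 0 < u := hu.1
      rw [abs_of_pos (by positivity), ← ENNReal.ofReal_mul (by positivity),
        density_transform haY hbY hu0]
    rw [setLIntegral_congr_fun measurableSet_Ioo hptw,
      ← ofReal_integral_eq_lintegral_ofReal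
        ((integrableOn_rpow_exp haY z).div_const _)
        (by filter_upwards [ae_restrict_mem measurableSet_Ioo] with u hu
            have : (0:ℝ) < u := hu.1
            positivity),
      integral_div]
  -- step 2 : outer integral reduced to `Ioi 0`
  have hXvanish : ∀ x ≤ (0:ℝ), ENNReal.ofReal (sqGammaDensity aX bX x) = 0 := by
    intro x hx
    rw [sqGammaDensity, if_neg (not_lt.2 hx)]
    simp
  have hmeas_inner : Measurable fun x : ℝ => Measure.map Y μ {y | x * y < K} :=
    measurable_measure_prodMk_left hS
  have step2 : (∫⁻ x, Measure.map Y μ {y | x * y < K} ∂(Measure.map X μ))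
      = ∫⁻ x in Set.Ioi 0, ENNReal.ofReal (sqGammaDensity aX bX x)
          * ENNReal.ofReal (G (Real.sqrt (K / x) / bY) / Real.Gamma (aY + 1)) := by
    rw [hXlaw, lintegral_withDensity_eq_lintegral_mul _
      ((measurable_sqGammaDensity aX bX).ennreal_ofReal) hmeas_inner,
      lintegral_eq_Ioi (fun x hx => by rw [Pi.mul_apply, hXvanish x hx, zero_mul])]
    exact setLIntegral_congr_fun measurableSet_Ioi (fun x hx => by
      rw [Pi.mul_apply, inner x hx])
  -- step 3 : change of variables in the outer integral
  have step3 : (∫⁻ x in Set.Ioi 0, ENNReal.ofReal (sqGammaDensity aX bX x)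
          * ENNReal.ofReal (G (Real.sqrt (K / x) / bY) / Real.Gamma (aY + 1)))
      = ∫⁻ t in Set.Ioi 0, ENNReal.ofReal
          (t ^ aX * Real.exp (-t) / Real.Gamma (aX + 1)
            * (G (Real.sqrt K / (bX * bY * t)) / Real.Gamma (aY + 1))) := by
    conv_lhs => rw [← sq_image_Ioi hbX]
    rw [lintegral_image_eq_lintegral_abs_deriv_mul' measurableSet_Ioi (sq_hasDeriv _)
      (sq_injOn hbX) _]
    refine setLIntegral_congr_fun measurableSet_Ioi (fun t ht => ?_)
    have ht0 : (0:ℝ) < t := ht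
    have harg : Real.sqrt (K / (bX ^ 2 * t ^ 2)) / bY = Real.sqrt K / (bX * bY * t) := by
      rw [Real.sqrt_div hK.le, show bX ^ 2 * t ^ 2 = (bX * t) ^ 2 by ring,
        Real.sqrt_sq (by positivity), div_div]
      congr 1
      ring
    rw [harg, abs_of_pos (by positivity), ← mul_assoc,
      ← ENNReal.ofReal_mul (by positivity), density_transform haX hbX ht0,
      ← ENNReal.ofReal_mul (div_nonneg (mul_nonneg (Real.rpow_nonneg ht0.le _)
        (Real.exp_nonneg _)) hΓX.le)]
  -- step 4 : wrap up
  have hψnonneg : ∀ t : ℝ, 0 < t → 0 ≤ t ^ aX * Real.exp (-t) / Real.Gamma (aX + 1)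
        * (G (Real.sqrt K / (bX * bY * t)) / Real.Gamma (aY + 1)) := fun t ht =>
    mul_nonneg (div_nonneg (mul_nonneg (Real.rpow_nonneg ht.le _) (Real.exp_nonneg _)) hΓX.le)
      (div_nonneg (hGnonneg _) hΓY.le)
  have hψmeas : Measurable fun t : ℝ => t ^ aX * Real.exp (-t) / Real.Gamma (aX + 1)
      * (G (Real.sqrt K / (bX * bY * t)) / Real.Gamma (aY + 1)) := by
    apply Measurable.mul
    · fun_prop
    · exact ((monotone_G haY).measurable.comp
        (measurable_const.div (measurable_const.mul measurable_id))).div_const _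
  have hRHS : (1 / Real.Gamma (aX + 1)) *
        ∫ t in Set.Ioi (0:ℝ), t ^ aX * Real.exp (-t) *
          (lincGamma (aY + 1) (Real.sqrt K / (bX * bY * t)) / Real.Gamma (aY + 1))
      = ∫ t in Set.Ioi (0:ℝ), t ^ aX * Real.exp (-t) / Real.Gamma (aX + 1)
          * (G (Real.sqrt K / (bX * bY * t)) / Real.Gamma (aY + 1)) := by
    rw [← integral_const_mul]
    refine setIntegral_congr_fun measurableSet_Ioi fun t ht => ?_
    have ht0 : (0:ℝ) < t := ht
    have hlg : lincGamma (aY + 1) (Real.sqrt K / (bX * bY * t))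
        = G (Real.sqrt K / (bX * bY * t)) := by
      rw [lincGamma, intervalIntegral.integral_of_le (by positivity),
        MeasureTheory.integral_Ioc_eq_integral_Ioo, hG]
      simp only [add_sub_cancel_right]
    rw [hlg]
    ring
  rw [hset, step1, step2, step3, hRHS,
    integral_eq_lintegral_of_nonneg_ae
      ((ae_restrict_iff' measurableSet_Ioi).2 (Filter.Eventually.of_forall fun t ht => hψnonneg t ht))
      hψmeas.aestronglyMeasurable.restrict]
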